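/- Let n ≥ 7 and let i, j, k be integers with 2 ≤ i ≤ n-5, i+2 < j < n and j+1 < k ≤ n, and set z = (i-1, i)(j-1, k) ∈ S_n. Then s_{j-1}s_j⋯s_{k-2} is a reduced expression (of length k-j), and the strong right Bruhat walk of length k-j whose t-th entry is z·s_{j-1}s_j⋯s_{j+t-3} for 1 ≤ t ≤ k-j (so its entries are z, zs_{j-1}, zs_{j-1}s_j, …, zs_{j-1}s_j⋯s_{k-3}) is compatible with this reduced expression. -/

import Mathlib

/-- The longest element `w₀` of the symmetric group on `Fin n`,
sending `t` to `n - 1 - t` (`0`-based), i.e. `t ↦ n + 1 - t` in `1`-based terms. -/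
def w0 (n : ℕ) : Equiv.Perm (Fin n) :=
  ⟨Fin.rev, Fin.rev, fun x => Fin.rev_rev x, fun x => Fin.rev_rev x⟩

/-- The Coxeter length of a permutation: its number of inversions. -/
def len {n : ℕ} (x : Equiv.Perm (Fin n)) : ℕ :=
  (Finset.univ.filter fun ab : Fin n × Fin n => ab.1 < ab.2 ∧ x ab.2 < x ab.1).card

/-- The pattern `p ∈ S_m` consecutively appears in `x ∈ S_n` at (`1`-based) position `i`.
Permutations of `{1, …, N}` are modelled (`0`-based) as permutations of `Fin N`. -/
def consecAppearsAt {m n : ℕ} (p : Equiv.Perm (Fin m)) (x : Equiv.Perm (Fin n)) (i : ℕ) :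
    Prop :=
  ∃ h : 1 ≤ i ∧ i + m ≤ n + 1,
    ∀ a b : Fin m,
      p a < p b ↔
        x ⟨i - 1 + a.val, by have := a.isLt; omega⟩ <
          x ⟨i - 1 + b.val, by have := b.isLt; omega⟩

/-- `x` consecutively contains the pattern `p`. -/
def consecContains {m n : ℕ} (p : Equiv.Perm (Fin m)) (x : Equiv.Perm (Fin n)) : Prop :=
  ∃ i : ℕ, consecAppearsAt p x i

/-- The pattern `2143 ∈ S₄` (`0`-based one-line notation: `1,0,3,2`). -/
def p2143 : Equiv.Perm (Fin 4) := Equiv.swap 0 1 * Equiv.swap 2 3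

/-- The pattern `14325 ∈ S₅` (`0`-based one-line notation: `0,3,2,1,4`). -/
def p14325 : Equiv.Perm (Fin 5) := Equiv.swap 1 3

/-- The pattern `1536247 ∈ S₇` (`0`-based one-line notation: `0,4,2,5,1,3,6`). -/
def p1536247 : Equiv.Perm (Fin 7) := Equiv.swap 1 4 * Equiv.swap 3 5

/-- The pattern `1462537 ∈ S₇` (`0`-based one-line notation: `0,3,5,1,4,2,6`). -/
def p1462537 : Equiv.Perm (Fin 7) := Equiv.swap 1 3 * Equiv.swap 2 5

/-- The pattern `1423 ∈ S₄` (`0`-based one-line notation: `0,3,1,2`). -/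
def p1423 : Equiv.Perm (Fin 4) := Equiv.swap 1 2 * Equiv.swap 1 3

/-- The pattern `2314 ∈ S₄` (`0`-based one-line notation: `1,2,0,3`). -/
def p2314 : Equiv.Perm (Fin 4) := Equiv.swap 0 2 * Equiv.swap 0 1

/-- The simple transposition `s_t = (t, t+1)` (`1`-based) as a permutation of `Fin n`
(junk value `1` if `t` is out of range). -/
def simpleT (n t : ℕ) : Equiv.Perm (Fin n) :=
  if h : 1 ≤ t ∧ t < n then Equiv.swap ⟨t - 1, by omega⟩ ⟨t, h.2⟩ else 1

/-- The product `s_a s_{a-1} ⋯ s_b` of simple transpositions with descending indices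
(the identity if `b > a`). -/
def descProd (n a b : ℕ) : Equiv.Perm (Fin n) :=
  ((List.range (a + 1 - b)).map fun t => simpleT n (a - t)).prod

/-- The product `s_a s_{a+1} ⋯ s_b` of simple transpositions with ascending indices
(the identity if `b < a`). -/
def ascProd (n a b : ℕ) : Equiv.Perm (Fin n) :=
  ((List.range (b + 1 - a)).map fun t => simpleT n (a + t)).prod

/-- `w s_b < w`, i.e. `s_b` is a right descent of `w`: `w(b) > w(b+1)` (`1`-based). -/
def rdes {n : ℕ} (w : Equiv.Perm (Fin n)) (b : ℕ) : Prop :=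
  ∃ h : 1 ≤ b ∧ b < n, w ⟨b, h.2⟩ < w ⟨b - 1, by omega⟩

/-- `w s_b > w`, i.e. `s_b` is a right ascent of `w`: `w(b) < w(b+1)` (`1`-based). -/
def rasc {n : ℕ} (w : Equiv.Perm (Fin n)) (b : ℕ) : Prop :=
  ∃ h : 1 ≤ b ∧ b < n, w ⟨b - 1, by omega⟩ < w ⟨b, h.2⟩

/-- `(W 1, …, W l)` is a strong right Bruhat walk: consecutive entries differ by right
multiplication by a simple transposition. -/
def isWalk {n : ℕ} (l : ℕ) (W : ℕ → Equiv.Perm (Fin n)) : Prop :=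
  ∀ t : ℕ, 1 ≤ t → t + 1 ≤ l → ∃ b : ℕ, 1 ≤ b ∧ b < n ∧ W (t + 1) = W t * simpleT n b

/-- The walk `(W 1, …, W l)` is compatible with the reduced expression
`s_{ι 1} s_{ι 2} ⋯ s_{ι l}`. -/
def compat {n : ℕ} (l : ℕ) (ι : ℕ → ℕ) (W : ℕ → Equiv.Perm (Fin n)) : Prop :=
  ∀ t : ℕ, 1 ≤ t → t ≤ l →
    rdes (W t) (ι t) ∧
    (2 ≤ t → rasc (W t) (ι (t - 1))) ∧
    (t + 1 ≤ l → rasc (W t) (ι (t + 1)))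

/-- Membership in `X_{m,n}^i`: the one-line values at positions `i, i+1, …, i+m-1`
(`1`-based) are increasing. -/
def windowIncr {n : ℕ} (m i : ℕ) (x : Equiv.Perm (Fin n)) : Prop :=
  ∀ a b : Fin n, i - 1 ≤ a.val → a < b → b.val < i - 1 + m → x a < x b

/-- The order-preserving identification of `Fin m` with the window
`{o, o+1, …, o+m-1}` inside `Fin n`. -/
def shiftEquiv (o m n : ℕ) (h : o + m ≤ n) :
    Fin m ≃ {x : Fin n // o ≤ x.val ∧ x.val < o + m} where
  toFun a := ⟨⟨o + a.val, by have := a.isLt; omega⟩, by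
    refine ⟨Nat.le_add_right _ _, ?_⟩
    show o + a.val < o + m
    have := a.isLt; omega⟩
  invFun x := ⟨x.val.val - o, by have := x.prop; omega⟩
  left_inv a := by
    apply Fin.ext
    show o + a.val - o = a.val
    omega
  right_inv x := by
    apply Subtype.ext
    apply Fin.ext
    show o + (x.val.val - o) = x.val.val
    have := x.prop
    omega

/-- The shift `F_{m,n}^i : S_m → S_n`, sending `i+a-1 ↦ i+p(a)-1` (`1`-based) and fixing
all other points. -/
def shiftPerm (m n i : ℕ) (h : i - 1 + m ≤ n) (p : Equiv.Perm (Fin m)) :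
    Equiv.Perm (Fin n) :=
  Equiv.Perm.extendDomain p (shiftEquiv (i - 1) m n h)


lemma ascProd_nil (n a b : ℕ) (h : b + 1 ≤ a) : ascProd n a b = 1 := by
  unfold ascProd
  have : b + 1 - a = 0 := by omega
  simp [this]

lemma ascProd_succ (n a b : ℕ) (h : a ≤ b + 1) :
    ascProd n a (b + 1) = ascProd n a b * simpleT n (b + 1) := by
  unfold ascProd
  have h1 : b + 1 + 1 - a = (b + 1 - a) + 1 := by omega
  rw [h1, List.range_succ, List.map_append, List.prod_append]
  have h2 : a + (b + 1 - a) = b + 1 := by omega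
  simp [h2]

lemma simpleT_val (n t : ℕ) (h1 : 1 ≤ t) (h2 : t < n) (x : Fin n) :
    ((simpleT n t) x).val = if x.val = t - 1 then t else if x.val = t then t - 1 else x.val := by
  unfold simpleT
  rw [dif_pos ⟨h1, h2⟩, Equiv.swap_apply_def]
  simp only [Fin.ext_iff, apply_ite (Fin.val), Fin.val_mk]

lemma ascProd_val_aux (n a : ℕ) (ha : 1 ≤ a) :
    ∀ c : ℕ, a - 1 + c < n → ∀ x : Fin n,
      ((ascProd n a (a - 1 + c)) x).val =
        if a - 1 ≤ x.val ∧ x.val ≤ a - 1 + c then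
          (if x.val = a - 1 + c then a - 1 else x.val + 1)
        else x.val := by
  intro c
  induction c with
  | zero =>
    intro hb x
    rw [ascProd_nil n a (a - 1 + 0) (by omega)]
    simp only [Equiv.Perm.one_apply]
    split_ifs <;> omega
  | succ c ih =>
    intro hb x
    have hstep : a - 1 + (c + 1) = (a - 1 + c) + 1 := by omega
    rw [hstep, ascProd_succ n a (a - 1 + c) (by omega), Equiv.Perm.mul_apply]
    have hs := simpleT_val n (a - 1 + c + 1) (by omega) (by omega) x
    rw [ih (by omega) _, hs]
    have hx := x.isLt
    split_ifs <;> omega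

lemma ascProd_val (n a b : ℕ) (ha : 1 ≤ a) (hab : a ≤ b + 1) (hb : b < n) (x : Fin n) :
    ((ascProd n a b) x).val =
      if a - 1 ≤ x.val ∧ x.val ≤ b then (if x.val = b then a - 1 else x.val + 1)
      else x.val := by
  obtain ⟨c, rfl⟩ : ∃ c, b = (a - 1) + c := ⟨b - (a - 1), by omega⟩
  exact ascProd_val_aux n a ha c hb x

set_option maxHeartbeats 1600000 in
lemma stmt15_aux (n i j k : ℕ) (hn : 7 ≤ n) (hi : 2 ≤ i) (hi' : i ≤ n - 5)
    (hij : i + 2 < j) (hj : j < n) (hjk : j + 1 < k) (hk : k ≤ n)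
    (z : Equiv.Perm (Fin n))
    (hz : z = Equiv.swap ⟨i - 2, lt_of_lt_of_le (by omega) le_rfl⟩ ⟨i - 1, lt_of_lt_of_le (by omega) le_rfl⟩ *
              Equiv.swap ⟨j - 2, lt_of_lt_of_le (by omega) le_rfl⟩ ⟨k - 1, lt_of_lt_of_le (by omega) le_rfl⟩) :
    len (ascProd n (j - 1) (k - 2)) = k - j ∧
    isWalk (k - j) (fun t => z * ascProd n (j - 1) (j + t - 3)) ∧
    compat (k - j) (fun t => j + t - 2) (fun t => z * ascProd n (j - 1) (j + t - 3)) := by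
  have hzval : ∀ y : Fin n, (z y).val =
      if y.val = i - 2 then i - 1 else if y.val = i - 1 then i - 2
      else if y.val = j - 2 then k - 1 else if y.val = k - 1 then j - 2 else y.val := by
    intro y
    rw [hz]
    simp only [Equiv.Perm.mul_apply, Equiv.swap_apply_def, Fin.ext_iff,
      apply_ite (Fin.val), Fin.val_mk]
    split_ifs <;> omega
  refine ⟨?_, ?_, ?_⟩
  · -- length
    have hC := fun x => ascProd_val n (j - 1) (k - 2) (by omega) (by omega) (by omega) x
    have key : ∀ ab : Fin n × Fin n,
        (ab.1 < ab.2 ∧ (ascProd n (j - 1) (k - 2)) ab.2 < (ascProd n (j - 1) (k - 2)) ab.1) ↔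
        (j - 2 ≤ ab.1.val ∧ ab.1.val < k - 2 ∧ ab.2.val = k - 2) := by
      intro ab
      have h1 := ab.1.isLt
      have h2 := ab.2.isLt
      rw [Fin.lt_def, Fin.lt_def, hC, hC]
      split_ifs <;> omega
    unfold len
    have hcard : (Finset.univ.filter fun ab : Fin n × Fin n =>
          ab.1 < ab.2 ∧ (ascProd n (j - 1) (k - 2)) ab.2 < (ascProd n (j - 1) (k - 2)) ab.1).card
        = (Finset.Ico (j - 2) (k - 2)).card := by
      refine Finset.card_nbij (fun ab => ab.1.val) ?_ ?_ ?_
      · intro ab hab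
        rw [Finset.mem_coe, Finset.mem_filter] at hab
        have := (key ab).mp hab.2
        simp only [Finset.mem_coe, Finset.mem_Ico]
        omega
      · intro ab ha ab' hb' heq
        simp only [Finset.coe_filter, Set.mem_setOf_eq] at ha hb'
        have h1 := (key ab).mp ha.2
        have h2 := (key ab').mp hb'.2
        have : ab.1 = ab'.1 := Fin.ext heq
        have : ab.2 = ab'.2 := Fin.ext (by omega)
        exact Prod.ext ‹ab.1 = ab'.1› this
      · intro p hp
        simp only [Finset.coe_Ico, Set.mem_Ico] at hp
        have hpn : p < n := by omega
        refine ⟨((⟨p, hpn⟩ : Fin n), (⟨k - 2, by omega⟩ : Fin n)), ?_, rfl⟩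
        refine Finset.mem_coe.mpr (Finset.mem_filter.mpr ⟨Finset.mem_univ _, (key _).mpr ?_⟩)
        refine ⟨?_, ?_, ?_⟩ <;> simp only [Fin.val_mk] <;> omega
    rw [hcard, Nat.card_Ico]
    omega
  · -- isWalk
    intro t ht1 ht2
    refine ⟨j + t - 2, by omega, by omega, ?_⟩
    show z * ascProd n (j - 1) (j + (t + 1) - 3) =
      z * ascProd n (j - 1) (j + t - 3) * simpleT n (j + t - 2)
    have h3 : j + (t + 1) - 3 = (j + t - 3) + 1 := by omega
    have h4 : (j + t - 3) + 1 = j + t - 2 := by omega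
    rw [h3, ascProd_succ n (j - 1) (j + t - 3) (by omega), h4, mul_assoc]
  · -- compat
    intro t ht1 ht2
    beta_reduce
    have hC := fun x => ascProd_val n (j - 1) (j + t - 3) (by omega) (by omega) (by omega) x
    have hW : ∀ x : Fin n, ((z * ascProd n (j - 1) (j + t - 3)) x).val =
        if x.val = j + t - 3 then k - 1
        else if j - 2 ≤ x.val ∧ x.val < j + t - 3 then x.val + 1
        else if x.val = i - 2 then i - 1 else if x.val = i - 1 then i - 2
        else if x.val = k - 1 then j - 2 else x.val := by
      intro x
      rw [Equiv.Perm.mul_apply, hzval, hC]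
      have := x.isLt
      split_ifs <;> omega
    unfold rdes rasc
    refine ⟨⟨⟨by omega, by omega⟩, ?_⟩, fun h2t => ⟨⟨by omega, by omega⟩, ?_⟩,
      fun htl => ⟨⟨by omega, by omega⟩, ?_⟩⟩ <;>
    · rw [Fin.lt_def, hW, hW]
      simp only [Fin.val_mk]
      split_ifs <;> omega

theorem stmt15 (n i j k : ℕ) (hn : 7 ≤ n) (hi : 2 ≤ i) (hi' : i ≤ n - 5)
    (hij : i + 2 < j) (hj : j < n) (hjk : j + 1 < k) (hk : k ≤ n)
    (z : Equiv.Perm (Fin n))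
    (hz : z = Equiv.swap ⟨i - 2, by omega⟩ ⟨i - 1, by omega⟩ *
              Equiv.swap ⟨j - 2, by omega⟩ ⟨k - 1, by omega⟩) :
    len (ascProd n (j - 1) (k - 2)) = k - j ∧
    isWalk (k - j) (fun t => z * ascProd n (j - 1) (j + t - 3)) ∧
    compat (k - j) (fun t => j + t - 2) (fun t => z * ascProd n (j - 1) (j + t - 3)) := by
  exact stmt15_aux n i j k hn hi hi' hij hj hjk hk z hz
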